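/- Let D be a strongly connected triangle-free oriented graph of order n whose strong connectivity k satisfies 1 ≤ k ≤ δ⁰(D). Then every vertex x of D lies on at least 2k + d⁺(x) + d⁻(x) + 1 − n directed 4-cycles such that any two of these cycles have only the vertex x in common. -/

import Mathlib

/-- A digraph is modeled as an irreflexive relation `G` on a finite vertex type.
`outDeg G x` is the out-degree of `x`. -/
noncomputable def outDeg {V : Type} (G : V → V → Prop) (x : V) : ℕ := {y | G x y}.ncard

/-- In-degree of `x`. -/
noncomputable def inDeg {V : Type} (G : V → V → Prop) (x : V) : ℕ := {y | G y x}.ncard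

/-- `G` is an oriented graph: no digons (hence also no loops). -/
def Oriented {V : Type} (G : V → V → Prop) : Prop := ∀ x y, G x y → ¬ G y x

/-- `G` contains a directed cycle of length at most 3 (a digon or a directed triangle;
for loopless digraphs the listed vertices are automatically distinct). -/
def HasCycleLe3 {V : Type} (G : V → V → Prop) : Prop :=
  (∃ x y, G x y ∧ G y x) ∨ ∃ x y z, G x y ∧ G y z ∧ G z x

/-- `G` contains a directed triangle. -/
def HasTriangle {V : Type} (G : V → V → Prop) : Prop := ∃ x y z, G x y ∧ G y z ∧ G z x

/-- `c` is admissible: every digraph of order `N` with minimum out-degree at least `c·N`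
contains a directed cycle of length at most 3. -/
def Admissible (c : ℝ) : Prop :=
  ∀ (W : Type) [Fintype W] (H : W → W → Prop), Irreflexive H →
    (∀ w, c * (Fintype.card W : ℝ) ≤ (outDeg H w : ℝ)) → HasCycleLe3 H

/-- `G` is strongly connected. -/
def StronglyConnected {V : Type} (G : V → V → Prop) : Prop :=
  ∀ x y : V, Relation.ReflTransGen G x y

/-- The digraph obtained from `G` by deleting the vertex set `S` is strongly connected. -/
def DelStrong {V : Type} (G : V → V → Prop) (S : Set V) : Prop :=
  ∀ x ∉ S, ∀ y ∉ S, Relation.ReflTransGen (fun a b => G a b ∧ a ∉ S ∧ b ∉ S) x y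

/-- The strong connectivity of `G`: the least cardinality of a set `S` of vertices such
that `G − S` is not strongly connected (`0` if `G` itself is not strongly connected). -/
noncomputable def strongConn {V : Type} (G : V → V → Prop) : ℕ :=
  sInf {k : ℕ | ∃ S : Set V, S.ncard = k ∧ ¬ DelStrong G S}

/-- The triple `t = (a, b, c)` encodes the directed 4-cycle `x → a → b → c → x`
through `x`, with the four vertices pairwise distinct. -/
def FourCycleAt {V : Type} (G : V → V → Prop) (x : V) (t : V × V × V) : Prop :=
  G x t.1 ∧ G t.1 t.2.1 ∧ G t.2.1 t.2.2 ∧ G t.2.2 x ∧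
    x ≠ t.1 ∧ x ≠ t.2.1 ∧ x ≠ t.2.2 ∧ t.1 ≠ t.2.1 ∧ t.1 ≠ t.2.2 ∧ t.2.1 ≠ t.2.2

/-- The vertex set of the 4-cycle through `x` encoded by `t`. -/
def cycVertsAt {V : Type} (x : V) (t : V × V × V) : Set V := {x, t.1, t.2.1, t.2.2}

/-- There is a directed walk of length exactly `p` from `x` to `y` in `G`. -/
def ReachIn {V : Type} (G : V → V → Prop) (p : ℕ) (x y : V) : Prop :=
  ∃ f : ℕ → V, f 0 = x ∧ f p = y ∧ ∀ i < p, G (f i) (f (i + 1))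

/-- Directed distance from `x` to `y` (length of a shortest directed path). -/
noncomputable def ddist {V : Type} (G : V → V → Prop) (x y : V) : ℕ :=
  sInf {p : ℕ | ReachIn G p x y}

/-- The number of arcs of `G`. -/
noncomputable def numArcs {V : Type} (G : V → V → Prop) : ℕ := {p : V × V | G p.1 p.2}.ncard

/-- The minimum out-degree `δ⁺(G)`. -/
noncomputable def minOutDeg {V : Type} (G : V → V → Prop) : ℕ :=
  sInf {k : ℕ | ∃ v, outDeg G v = k}

/-- The minimum in-degree `δ⁻(G)`. -/
noncomputable def minInDeg {V : Type} (G : V → V → Prop) : ℕ :=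
  sInf {k : ℕ | ∃ v, inDeg G v = k}

/-- The minimum semi-degree `δ⁰(G)`. -/
noncomputable def minSemiDeg {V : Type} (G : V → V → Prop) : ℕ :=
  sInf {k : ℕ | ∃ v, min (outDeg G v) (inDeg G v) = k}

/-- The number of unordered pairs of distinct non-adjacent vertices of `G`. -/
noncomputable def nonAdjPairs {V : Type} (G : V → V → Prop) : ℕ :=
  {s : Sym2 V | ∃ x y : V, s = s(x, y) ∧ x ≠ y ∧ ¬ G x y ∧ ¬ G y x}.ncard


section Helpers

open scoped Classical

variable {V : Type}

lemma exists_least {P : ℕ → Prop} (h : ∃ n, P n) : ∃ n, P n ∧ ∀ m, m < n → ¬ P m := by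
  classical
  exact ⟨Nat.find h, Nat.find_spec h, fun m hm => Nat.find_min h hm⟩

lemma exists_greatest {P : ℕ → Prop} {b : ℕ} (hb : ∀ n, P n → n ≤ b) (h : ∃ n, P n) :
    ∃ n, P n ∧ ∀ m, P m → m ≤ n := by
  classical
  obtain ⟨n, hn⟩ := h
  exact ⟨Nat.findGreatest P b, Nat.findGreatest_spec (hb n hn) hn,
    fun m hm => Nat.le_findGreatest (hb m hm) hm⟩

/-- A walk of length `p` along arcs of `E`. -/
def WalkOn (E : Finset (V × V)) (p : ℕ) (f : ℕ → V) : Prop :=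
  ∀ i, i < p → (f i, f (i + 1)) ∈ E

/-- The vertex set of a walk. -/
noncomputable def vertsW (p : ℕ) (f : ℕ → V) : Finset V := (Finset.range (p + 1)).image f

lemma mem_vertsW {p : ℕ} {f : ℕ → V} {w : V} : w ∈ vertsW p f ↔ ∃ i, i ≤ p ∧ f i = w := by
  simp [vertsW, Finset.mem_image, Finset.mem_range, Nat.lt_succ_iff]

/-- `S` separates `A` from `B` in the digraph with arc set `E`. -/
def SepOn (E : Finset (V × V)) (A B S : Set V) : Prop :=
  ∀ p f, WalkOn E p f → f 0 ∈ A → f p ∈ B → ∃ i, i ≤ p ∧ f i ∈ S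

lemma walkOn_mono {E E' : Finset (V × V)} (h : E ⊆ E') {p : ℕ} {f : ℕ → V}
    (hw : WalkOn E p f) : WalkOn E' p f := fun i hi => h (hw i hi)

lemma walkOn_prefix {E : Finset (V × V)} {p p' : ℕ} {f : ℕ → V}
    (hw : WalkOn E p f) (h : p' ≤ p) : WalkOn E p' f := fun i hi => hw i (by omega)

lemma walkOn_shift {E : Finset (V × V)} {p : ℕ} {f : ℕ → V}
    (hw : WalkOn E p f) (a : ℕ) : WalkOn E (p - a) (fun j => f (a + j)) := by
  intro i hi
  have := hw (a + i) (by omega)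
  simpa [Nat.add_assoc] using this

lemma vertsW_shift_subset {p a : ℕ} {f : ℕ → V} (ha : a ≤ p) :
    vertsW (p - a) (fun j => f (a + j)) ⊆ vertsW p f := by
  intro w hw
  obtain ⟨i, hi, rfl⟩ := mem_vertsW.mp hw
  exact mem_vertsW.mpr ⟨a + i, by omega, rfl⟩

lemma vertsW_prefix_subset {p p' : ℕ} {f : ℕ → V} (h : p' ≤ p) :
    vertsW p' f ⊆ vertsW p f := by
  intro w hw
  obtain ⟨i, hi, rfl⟩ := mem_vertsW.mp hw
  exact mem_vertsW.mpr ⟨i, by omega, rfl⟩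

/-- Concatenation of two walks sharing the junction vertex. -/
def glueS (p : ℕ) (f g : ℕ → V) : ℕ → V := fun j => if j < p then f j else g (j - p)

/-- Concatenation of two walks joined by an extra arc. -/
def glueE (p : ℕ) (f g : ℕ → V) : ℕ → V := fun j => if j ≤ p then f j else g (j - p - 1)

lemma glueS_walk {E : Finset (V × V)} {p q : ℕ} {f g : ℕ → V}
    (hf : WalkOn E p f) (hg : WalkOn E q g) (hj : f p = g 0) :
    WalkOn E (p + q) (glueS p f g) := by
  intro i hi
  rcases lt_trichotomy (i + 1) p with h | h | h
  · have h1 : i < p := by omega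
    simp only [glueS, if_pos h1, if_pos h]
    exact hf i h1
  · have h1 : i < p := by omega
    simp only [glueS, if_pos h1, if_neg (show ¬ i + 1 < p by omega)]
    rw [show i + 1 - p = 0 by omega, ← hj, ← h]
    exact hf i h1
  · have h1 : ¬ i < p := by omega
    have h2 : ¬ i + 1 < p := by omega
    simp only [glueS, if_neg h1, if_neg h2]
    rw [show i + 1 - p = (i - p) + 1 by omega]
    exact hg (i - p) (by omega)

lemma glueS_zero {p : ℕ} {f g : ℕ → V} (hj : f p = g 0) : glueS p f g 0 = f 0 := by
  by_cases h : 0 < p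
  · simp [glueS, h]
  · have : p = 0 := by omega
    subst this
    simp [glueS, ← hj]

lemma glueS_last {p q : ℕ} {f g : ℕ → V} : glueS p f g (p + q) = g q := by
  simp [glueS, show ¬ p + q < p by omega, Nat.add_sub_cancel_left]

lemma glueS_verts {p q : ℕ} {f g : ℕ → V} :
    vertsW (p + q) (glueS p f g) ⊆ vertsW p f ∪ vertsW q g := by
  intro w hw
  obtain ⟨i, hi, rfl⟩ := mem_vertsW.mp hw
  by_cases h : i < p
  · exact Finset.mem_union_left _ (mem_vertsW.mpr ⟨i, by omega, by simp [glueS, h]⟩)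
  · exact Finset.mem_union_right _ (mem_vertsW.mpr ⟨i - p, by omega, by simp [glueS, h]⟩)

lemma glueE_walk {E : Finset (V × V)} {p q : ℕ} {f g : ℕ → V}
    (hf : WalkOn E p f) (hg : WalkOn E q g) (hj : (f p, g 0) ∈ E) :
    WalkOn E (p + 1 + q) (glueE p f g) := by
  intro i hi
  rcases lt_trichotomy i p with h | h | h
  · have h1 : i ≤ p := by omega
    have h2 : i + 1 ≤ p := by omega
    simp only [glueE, if_pos h1, if_pos h2]
    exact hf i h
  · subst h
    simp only [glueE, if_pos (le_refl i), if_neg (show ¬ i + 1 ≤ i by omega)]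
    rw [show i + 1 - i - 1 = 0 by omega]
    exact hj
  · have h1 : ¬ i ≤ p := by omega
    have h2 : ¬ i + 1 ≤ p := by omega
    simp only [glueE, if_neg h1, if_neg h2]
    rw [show i + 1 - p - 1 = (i - p - 1) + 1 by omega]
    exact hg (i - p - 1) (by omega)

lemma glueE_zero {p : ℕ} {f g : ℕ → V} : glueE p f g 0 = f 0 := by
  simp [glueE]

lemma glueE_last {p q : ℕ} {f g : ℕ → V} : glueE p f g (p + 1 + q) = g q := by
  simp only [glueE, if_neg (show ¬ p + 1 + q ≤ p by omega)]
  congr 1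
  omega

lemma glueE_verts {p q : ℕ} {f g : ℕ → V} :
    vertsW (p + 1 + q) (glueE p f g) ⊆ vertsW p f ∪ vertsW q g := by
  intro w hw
  obtain ⟨i, hi, rfl⟩ := mem_vertsW.mp hw
  by_cases h : i ≤ p
  · exact Finset.mem_union_left _ (mem_vertsW.mpr ⟨i, by omega, by simp [glueE, h]⟩)
  · exact Finset.mem_union_right _ (mem_vertsW.mpr ⟨i - p - 1, by omega, by simp [glueE, h]⟩)

end Helpers

section MengerSec

open scoped Classical

variable {V : Type} [Fintype V]

lemma mengerEmpty (A B : Set V) (k : ℕ)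
    (hcut : ∀ S : Finset V, SepOn (∅ : Finset (V × V)) A B ↑S → k ≤ S.card) :
    ∃ P : Fin k → ℕ × (ℕ → V),
      (∀ i, WalkOn (∅ : Finset (V × V)) (P i).1 (P i).2 ∧ (P i).2 0 ∈ A ∧ (P i).2 (P i).1 ∈ B) ∧
      ∀ i j, i ≠ j → Disjoint (vertsW (P i).1 (P i).2) (vertsW (P j).1 (P j).2) := by
  classical
  set S₀ : Finset V := (Set.toFinite (A ∩ B)).toFinset with hS₀
  have hsep : SepOn (∅ : Finset (V × V)) A B ↑S₀ := by
    intro p f hw h0 hp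
    have hp0 : p = 0 := by
      by_contra h
      exact absurd (hw 0 (by omega)) (Finset.notMem_empty _)
    subst hp0
    refine ⟨0, le_refl 0, ?_⟩
    simp only [hS₀, Finset.mem_coe, Set.Finite.mem_toFinset]
    exact ⟨h0, hp⟩
  have hk : k ≤ S₀.card := hcut S₀ hsep
  obtain ⟨S₁, hsub, hcard⟩ := Finset.exists_subset_card_eq hk
  let e := (Finset.equivFinOfCardEq hcard).symm
  refine ⟨fun i => (0, fun _ => (e i : V)), fun i => ?_, fun i j hij => ?_⟩
  · refine ⟨fun t ht => absurd ht (Nat.not_lt_zero t), ?_, ?_⟩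
    · have : (e i : V) ∈ S₀ := hsub (e i).2
      have := (Set.Finite.mem_toFinset _).mp this
      exact this.1
    · have : (e i : V) ∈ S₀ := hsub (e i).2
      have := (Set.Finite.mem_toFinset _).mp this
      exact this.2
  · rw [Finset.disjoint_left]
    intro w hwi hwj
    obtain ⟨a, _, ha⟩ := mem_vertsW.mp hwi
    obtain ⟨b, _, hb⟩ := mem_vertsW.mp hwj
    simp only at ha hb
    have : (e i : V) = (e j : V) := ha.trans hb.symm
    exact hij (e.injective (Subtype.ext this))

end MengerSec

section MengerMain

open scoped Classical

variable {V : Type} [Fintype V]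

theorem mengerAux : ∀ (n : ℕ) (E : Finset (V × V)), E.card ≤ n →
    ∀ (A B : Set V) (k : ℕ),
    (∀ S : Finset V, SepOn E A B ↑S → k ≤ S.card) →
    ∃ P : Fin k → ℕ × (ℕ → V),
      (∀ i, WalkOn E (P i).1 (P i).2 ∧ (P i).2 0 ∈ A ∧ (P i).2 (P i).1 ∈ B) ∧
      ∀ i j, i ≠ j → Disjoint (vertsW (P i).1 (P i).2) (vertsW (P j).1 (P j).2) := by
  intro n
  induction n with
  | zero =>
    intro E hE A B k hcut
    have : E = ∅ := Finset.card_eq_zero.mp (by omega)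
    subst this
    exact mengerEmpty A B k hcut
  | succ n ihn =>
    intro E hE A B k hcut
    by_cases hE0 : E = ∅
    · subst hE0; exact mengerEmpty A B k hcut
    obtain ⟨e₀, he₀⟩ := Finset.nonempty_iff_ne_empty.mpr hE0
    set u := e₀.1 with hu_def
    set v := e₀.2 with hv_def
    set E' := E.erase e₀ with hE'_def
    have hE'card : E'.card ≤ n := by
      have h1 : E'.card = E.card - 1 := by
        rw [hE'_def]; exact Finset.card_erase_of_mem he₀
      have h2 : 1 ≤ E.card := Finset.card_pos.mpr ⟨e₀, he₀⟩
      omega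
    have hE'sub : E' ⊆ E := Finset.erase_subset _ _
    by_cases hrec : ∀ S : Finset V, SepOn E' A B ↑S → k ≤ S.card
    · obtain ⟨P, h1, h2⟩ := ihn E' hE'card A B k hrec
      exact ⟨P, fun i => ⟨walkOn_mono hE'sub (h1 i).1, (h1 i).2⟩, h2⟩
    push_neg at hrec
    obtain ⟨S, hS, hSk⟩ := hrec
    -- `S ∪ {u}` and `S ∪ {v}` are separators for `E`
    have hSu : SepOn E A B ↑(insert u S) := by
      intro p f hw h0 hp
      by_cases hu : ∃ i, i ≤ p ∧ f i = u
      · obtain ⟨i, hip, hiu⟩ := hu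
        exact ⟨i, hip, by simp [hiu]⟩
      · push_neg at hu
        have hw' : WalkOn E' p f := fun i hi => Finset.mem_erase.mpr
          ⟨fun hc => hu i (le_of_lt hi) (congrArg Prod.fst hc), hw i hi⟩
        obtain ⟨i, hip, hiS⟩ := hS p f hw' h0 hp
        exact ⟨i, hip, by
          simp only [Finset.coe_insert, Set.mem_insert_iff]; exact Or.inr hiS⟩
    have hSv : SepOn E A B ↑(insert v S) := by
      intro p f hw h0 hp
      by_cases hv : ∃ i, i ≤ p ∧ f i = v
      · obtain ⟨i, hip, hiv⟩ := hv
        exact ⟨i, hip, by simp [hiv]⟩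
      · push_neg at hv
        have hw' : WalkOn E' p f := fun i hi => Finset.mem_erase.mpr
          ⟨fun hc => hv (i + 1) (by omega) (congrArg Prod.snd hc), hw i hi⟩
        obtain ⟨i, hip, hiS⟩ := hS p f hw' h0 hp
        exact ⟨i, hip, by
          simp only [Finset.coe_insert, Set.mem_insert_iff]; exact Or.inr hiS⟩
    have hku : k ≤ (insert u S).card := hcut _ hSu
    have hkv : k ≤ (insert v S).card := hcut _ hSv
    have hunotS : u ∉ S := by
      intro hin
      rw [Finset.insert_eq_self.mpr hin] at hku
      omega
    have hvnotS : v ∉ S := by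
      intro hin
      rw [Finset.insert_eq_self.mpr hin] at hkv
      omega
    have hcard_u : (insert u S).card = k := by
      rw [Finset.card_insert_of_notMem hunotS]
      rw [Finset.card_insert_of_notMem hunotS] at hku
      omega
    have hcard_v : (insert v S).card = k := by
      rw [Finset.card_insert_of_notMem hvnotS]
      rw [Finset.card_insert_of_notMem hvnotS] at hkv
      omega
    -- every `A`–`S∪{u}` separator of `E'` is large
    have hcutP : ∀ T : Finset V, SepOn E' A ↑(insert u S) ↑T → k ≤ T.card := by
      intro T hT
      refine hcut T ?_
      intro p f hw h0 hp
      by_cases hu : ∃ i, i ≤ p ∧ f i = u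
      · obtain ⟨i₀, ⟨hi₀p, hi₀u⟩, hmin⟩ := exists_least hu
        have hw' : WalkOn E' i₀ f := by
          intro i hi
          refine Finset.mem_erase.mpr ⟨?_, hw i (by omega)⟩
          intro hc
          exact hmin i hi ⟨by omega, congrArg Prod.fst hc⟩
        obtain ⟨j, hj, hjT⟩ := hT i₀ f hw' h0
          (by simp only [Finset.coe_insert, Set.mem_insert_iff]; exact Or.inl hi₀u)
        exact ⟨j, by omega, hjT⟩
      · push_neg at hu
        have hw' : WalkOn E' p f := fun i hi => Finset.mem_erase.mpr
          ⟨fun hc => hu i (le_of_lt hi) (congrArg Prod.fst hc), hw i hi⟩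
        obtain ⟨i, hip, hiS⟩ := hS p f hw' h0 hp
        obtain ⟨j, hj, hjT⟩ := hT i f (walkOn_prefix hw' hip) h0
          (by simp only [Finset.coe_insert, Set.mem_insert_iff]; exact Or.inr hiS)
        exact ⟨j, by omega, hjT⟩
    -- every `S∪{v}`–`B` separator of `E'` is large
    have hcutQ : ∀ T : Finset V, SepOn E' ↑(insert v S) B ↑T → k ≤ T.card := by
      intro T hT
      refine hcut T ?_
      intro p f hw h0 hp
      by_cases hv' : ∃ i, i ≤ p ∧ f i = v
      · obtain ⟨i₀, ⟨hi₀p, hi₀v⟩, hmax⟩ := exists_greatest (fun m hm => hm.1) hv'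
        have hw' : WalkOn E' (p - i₀) (fun j => f (i₀ + j)) := by
          intro j hj
          refine Finset.mem_erase.mpr ⟨?_, by
            have := hw (i₀ + j) (by omega)
            simpa [Nat.add_assoc] using this⟩
          intro hc
          have h2 : f (i₀ + j + 1) = v := congrArg Prod.snd hc
          have := hmax (i₀ + j + 1) ⟨by omega, h2⟩
          omega
        obtain ⟨j, hj, hjT⟩ := hT (p - i₀) _ hw'
          (by
            simp only [Finset.coe_insert, Set.mem_insert_iff]
            exact Or.inl (by simpa using hi₀v))
          (by
            show f (i₀ + (p - i₀)) ∈ B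
            rw [show i₀ + (p - i₀) = p by omega]
            exact hp)
        exact ⟨i₀ + j, by omega, hjT⟩
      · push_neg at hv'
        have hw' : WalkOn E' p f := fun i hi => Finset.mem_erase.mpr
          ⟨fun hc => hv' (i + 1) (by omega) (congrArg Prod.snd hc), hw i hi⟩
        obtain ⟨i, hip, hiS⟩ := hS p f hw' h0 hp
        obtain ⟨j, hj, hjT⟩ := hT (p - i) (fun t => f (i + t)) (walkOn_shift hw' i)
          (by
            simp only [Finset.coe_insert, Set.mem_insert_iff]
            exact Or.inr (by simpa using hiS))
          (by
            show f (i + (p - i)) ∈ B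
            rw [show i + (p - i) = p by omega]
            exact hp)
        exact ⟨i + j, by omega, hjT⟩
    -- recursive calls
    obtain ⟨P₀, hP₀, hP₀d⟩ := ihn E' hE'card A ↑(insert u S) k hcutP
    obtain ⟨Q₀, hQ₀, hQ₀d⟩ := ihn E' hE'card ↑(insert v S) B k hcutQ
    -- trim the walks
    have trimP : ∀ i : Fin k, ∃ pf : ℕ × (ℕ → V),
        WalkOn E' pf.1 pf.2 ∧ pf.2 0 ∈ A ∧ pf.2 pf.1 ∈ insert u S ∧
        (∀ t, t < pf.1 → pf.2 t ∉ insert u S) ∧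
        vertsW pf.1 pf.2 ⊆ vertsW (P₀ i).1 (P₀ i).2 := by
      intro i
      obtain ⟨hw, h0, hlast⟩ := hP₀ i
      have hex : ∃ t, t ≤ (P₀ i).1 ∧ (P₀ i).2 t ∈ insert u S :=
        ⟨(P₀ i).1, le_refl _, by exact_mod_cast hlast⟩
      obtain ⟨t₀, ⟨ht₀p, ht₀m⟩, hmin⟩ := exists_least hex
      exact ⟨(t₀, (P₀ i).2), walkOn_prefix hw ht₀p, h0, ht₀m,
        fun t ht hc => hmin t ht ⟨by omega, hc⟩, vertsW_prefix_subset ht₀p⟩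
    choose Pt hPtw hPt0 hPtlast hPtmin hPtsub using trimP
    have trimQ : ∀ i : Fin k, ∃ qg : ℕ × (ℕ → V),
        WalkOn E' qg.1 qg.2 ∧ qg.2 0 ∈ insert v S ∧ qg.2 qg.1 ∈ B ∧
        (∀ t, 0 < t → t ≤ qg.1 → qg.2 t ∉ insert v S) ∧
        vertsW qg.1 qg.2 ⊆ vertsW (Q₀ i).1 (Q₀ i).2 := by
      intro i
      obtain ⟨hw, h0, hlast⟩ := hQ₀ i
      have hex : ∃ t, t ≤ (Q₀ i).1 ∧ (Q₀ i).2 t ∈ insert v S :=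
        ⟨0, by omega, by exact_mod_cast h0⟩
      obtain ⟨t₀, ht₀, hmax⟩ := exists_greatest (fun m hm => hm.1) hex
      refine ⟨((Q₀ i).1 - t₀, fun j => (Q₀ i).2 (t₀ + j)), walkOn_shift hw t₀, ?_, ?_, ?_,
        vertsW_shift_subset ht₀.1⟩
      · show (Q₀ i).2 (t₀ + 0) ∈ insert v S
        simpa using ht₀.2
      · show (Q₀ i).2 (t₀ + ((Q₀ i).1 - t₀)) ∈ B
        rw [show t₀ + ((Q₀ i).1 - t₀) = (Q₀ i).1 by omega]
        exact hlast
      · intro t ht1 ht2 hc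
        have := hmax (t₀ + t) ⟨by omega, hc⟩
        omega
    choose Qt hQtw hQt0 hQtlast hQtmin hQtsub using trimQ
    have hPtd : ∀ i j : Fin k, i ≠ j →
        Disjoint (vertsW (Pt i).1 (Pt i).2) (vertsW (Pt j).1 (Pt j).2) :=
      fun i j hij => Disjoint.mono (hPtsub i) (hPtsub j) (hP₀d i j hij)
    have hQtd : ∀ i j : Fin k, i ≠ j →
        Disjoint (vertsW (Qt i).1 (Qt i).2) (vertsW (Qt j).1 (Qt j).2) :=
      fun i j hij => Disjoint.mono (hQtsub i) (hQtsub j) (hQ₀d i j hij)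
    set lastP : Fin k → V := fun i => (Pt i).2 (Pt i).1 with hlastP_def
    set headQ : Fin k → V := fun i => (Qt i).2 0 with hheadQ_def
    have hlastP_mem : ∀ i, lastP i ∈ insert u S := fun i => hPtlast i
    have hheadQ_mem : ∀ i, headQ i ∈ insert v S := fun i => hQt0 i
    have hlastP_in : ∀ i, lastP i ∈ vertsW (Pt i).1 (Pt i).2 :=
      fun i => mem_vertsW.mpr ⟨(Pt i).1, le_refl _, rfl⟩
    have hheadQ_in : ∀ i, headQ i ∈ vertsW (Qt i).1 (Qt i).2 :=
      fun i => mem_vertsW.mpr ⟨0, by omega, rfl⟩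
    have hlastP_inj : Function.Injective lastP := by
      intro i j hij2
      by_contra hne
      have hni := Finset.disjoint_left.mp (hPtd i j hne) (hlastP_in i)
      rw [hij2] at hni
      exact hni (hlastP_in j)
    have hheadQ_inj : Function.Injective headQ := by
      intro i j hij2
      by_contra hne
      have hni := Finset.disjoint_left.mp (hQtd i j hne) (hheadQ_in i)
      rw [hij2] at hni
      exact hni (hheadQ_in j)
    set m : Fin k → V := fun i => if lastP i = u then v else lastP i with hm_def
    have hm_mem : ∀ i, m i ∈ insert v S := by
      intro i
      by_cases h : lastP i = u
      · simp [hm_def, h]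
      · have hS' : lastP i ∈ S := by
          have := hlastP_mem i
          rw [Finset.mem_insert] at this
          tauto
        simp only [hm_def, if_neg h]
        exact Finset.mem_insert_of_mem hS'
    have hm_inj : Function.Injective m := by
      intro i j hij2
      by_cases hi : lastP i = u <;> by_cases hj : lastP j = u
      · exact hlastP_inj (hi.trans hj.symm)
      · exfalso
        have hSj : lastP j ∈ S := by
          have := hlastP_mem j
          rw [Finset.mem_insert] at this
          tauto
        simp only [hm_def, if_pos hi, if_neg hj] at hij2
        rw [← hij2] at hSj
        exact hvnotS hSj
      · exfalso
        have hSi : lastP i ∈ S := by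
          have := hlastP_mem i
          rw [Finset.mem_insert] at this
          tauto
        simp only [hm_def, if_neg hi, if_pos hj] at hij2
        rw [hij2] at hSi
        exact hvnotS hSi
      · simp only [hm_def, if_neg hi, if_neg hj] at hij2
        exact hlastP_inj hij2
    have hbij : Function.Bijective
        (fun i : Fin k => (⟨headQ i, hheadQ_mem i⟩ : { y // y ∈ insert v S })) := by
      rw [Fintype.bijective_iff_injective_and_card]
      constructor
      · intro i j h
        exact hheadQ_inj (congrArg Subtype.val h)
      · rw [Fintype.card_coe, hcard_v, Fintype.card_fin]
    have hτex : ∀ i : Fin k, ∃ j, headQ j = m i := by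
      intro i
      obtain ⟨j, hj⟩ := hbij.2 ⟨m i, hm_mem i⟩
      exact ⟨j, congrArg Subtype.val hj⟩
    choose τ hτ using hτex
    have hτ_inj : Function.Injective τ := by
      intro i j h
      apply hm_inj
      rw [← hτ i, ← hτ j, h]
    -- key disjointness lemma
    have key : ∀ i j : Fin k, ∀ w, w ∈ vertsW (Pt i).1 (Pt i).2 →
        w ∈ vertsW (Qt j).1 (Qt j).2 → w = lastP i ∧ w = headQ j ∧ w ∈ S := by
      intro i j w hwP hwQ
      obtain ⟨a, hap, haw⟩ := mem_vertsW.mp hwP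
      obtain ⟨b, hbq, hbw⟩ := mem_vertsW.mp hwQ
      have hshare : (Pt i).2 a = (fun t => (Qt j).2 (b + t)) 0 := by
        show (Pt i).2 a = (Qt j).2 (b + 0)
        rw [haw]
        rw [show b + 0 = b from rfl]
        exact hbw.symm
      have hcomb : WalkOn E' (a + ((Qt j).1 - b))
          (glueS a (Pt i).2 (fun t => (Qt j).2 (b + t))) :=
        glueS_walk (walkOn_prefix (hPtw i) hap) (walkOn_shift (hQtw j) b) hshare
      have h0c : glueS a (Pt i).2 (fun t => (Qt j).2 (b + t)) 0 ∈ A := by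
        rw [glueS_zero hshare]
        exact hPt0 i
      have hpc : glueS a (Pt i).2 (fun t => (Qt j).2 (b + t)) (a + ((Qt j).1 - b)) ∈ B := by
        rw [glueS_last]
        show (Qt j).2 (b + ((Qt j).1 - b)) ∈ B
        rw [show b + ((Qt j).1 - b) = (Qt j).1 by omega]
        exact hQtlast j
      obtain ⟨c, hc, hcS⟩ := hS _ _ hcomb h0c hpc
      by_cases hca : c < a
      · exfalso
        have hfc : (Pt i).2 c ∈ S := by
          have : glueS a (Pt i).2 (fun t => (Qt j).2 (b + t)) c = (Pt i).2 c := by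
            simp [glueS, hca]
          rw [this] at hcS
          exact_mod_cast hcS
        exact hPtmin i c (by omega) (Finset.mem_insert_of_mem hfc)
      · have hgc : (Qt j).2 (b + (c - a)) ∈ S := by
          have : glueS a (Pt i).2 (fun t => (Qt j).2 (b + t)) c = (Qt j).2 (b + (c - a)) := by
            simp [glueS, hca]
          rw [this] at hcS
          exact_mod_cast hcS
        have hb0 : b + (c - a) = 0 := by
          by_contra hne
          exact hQtmin j (b + (c - a)) (by omega) (by omega) (Finset.mem_insert_of_mem hgc)
        have hb : b = 0 := by omega
        have hceq : c = a := by omega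
        have hwS : w ∈ S := by
          rw [hb0] at hgc
          rw [← hbw, hb]
          exact hgc
        have haP : a = (Pt i).1 := by
          by_contra hne
          refine hPtmin i a (by omega) (Finset.mem_insert_of_mem ?_)
          rw [haw]
          exact hwS
        refine ⟨?_, ?_, hwS⟩
        · rw [← haw, haP]
        · rw [← hbw, hb]
    -- glue the two systems
    set Rw : Fin k → ℕ × (ℕ → V) := fun i =>
      if lastP i = u then
        ((Pt i).1 + 1 + (Qt (τ i)).1, glueE (Pt i).1 (Pt i).2 (Qt (τ i)).2)
      else
        ((Pt i).1 + (Qt (τ i)).1, glueS (Pt i).1 (Pt i).2 (Qt (τ i)).2) with hRw_def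
    have hshare' : ∀ i, lastP i ≠ u → (Pt i).2 (Pt i).1 = (Qt (τ i)).2 0 := by
      intro i h
      have h1 : m i = lastP i := by simp [hm_def, h]
      have h2 : headQ (τ i) = lastP i := by rw [hτ i, h1]
      exact h2.symm
    have hRw_walk : ∀ i, WalkOn E (Rw i).1 (Rw i).2 ∧ (Rw i).2 0 ∈ A ∧
        (Rw i).2 (Rw i).1 ∈ B := by
      intro i
      by_cases h : lastP i = u
      · have hRwi : Rw i = ((Pt i).1 + 1 + (Qt (τ i)).1,
            glueE (Pt i).1 (Pt i).2 (Qt (τ i)).2) := by simp [hRw_def, h]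
        rw [hRwi]
        have hedge : ((Pt i).2 (Pt i).1, (Qt (τ i)).2 0) ∈ E := by
          have h1 : headQ (τ i) = v := by rw [hτ i]; simp [hm_def, h]
          have h2 : (Pt i).2 (Pt i).1 = u := h
          have h3 : (Qt (τ i)).2 0 = v := h1
          rw [h2, h3, hu_def, hv_def]
          exact he₀
        refine ⟨glueE_walk (walkOn_mono hE'sub (hPtw i)) (walkOn_mono hE'sub (hQtw (τ i))) hedge,
          ?_, ?_⟩
        · show glueE (Pt i).1 (Pt i).2 (Qt (τ i)).2 0 ∈ A
          rw [glueE_zero]; exact hPt0 i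
        · show glueE (Pt i).1 (Pt i).2 (Qt (τ i)).2 ((Pt i).1 + 1 + (Qt (τ i)).1) ∈ B
          rw [glueE_last]; exact hQtlast (τ i)
      · have hRwi : Rw i = ((Pt i).1 + (Qt (τ i)).1,
            glueS (Pt i).1 (Pt i).2 (Qt (τ i)).2) := by simp [hRw_def, h]
        rw [hRwi]
        refine ⟨glueS_walk (walkOn_mono hE'sub (hPtw i)) (walkOn_mono hE'sub (hQtw (τ i)))
            (hshare' i h), ?_, ?_⟩
        · show glueS (Pt i).1 (Pt i).2 (Qt (τ i)).2 0 ∈ A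
          rw [glueS_zero (hshare' i h)]; exact hPt0 i
        · show glueS (Pt i).1 (Pt i).2 (Qt (τ i)).2 ((Pt i).1 + (Qt (τ i)).1) ∈ B
          rw [glueS_last]; exact hQtlast (τ i)
    have hRw_verts : ∀ i, vertsW (Rw i).1 (Rw i).2 ⊆
        vertsW (Pt i).1 (Pt i).2 ∪ vertsW (Qt (τ i)).1 (Qt (τ i)).2 := by
      intro i
      by_cases h : lastP i = u
      · have hRwi : Rw i = ((Pt i).1 + 1 + (Qt (τ i)).1,
            glueE (Pt i).1 (Pt i).2 (Qt (τ i)).2) := by simp [hRw_def, h]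
        rw [hRwi]
        exact glueE_verts
      · have hRwi : Rw i = ((Pt i).1 + (Qt (τ i)).1,
            glueS (Pt i).1 (Pt i).2 (Qt (τ i)).2) := by simp [hRw_def, h]
        rw [hRwi]
        exact glueS_verts
    refine ⟨Rw, hRw_walk, ?_⟩
    intro i j hij
    rw [Finset.disjoint_left]
    intro w hwi hwj
    have hwi' := hRw_verts i hwi
    have hwj' := hRw_verts j hwj
    rw [Finset.mem_union] at hwi' hwj'
    have hPQ : ∀ i' j' : Fin k, i' ≠ j' → w ∈ vertsW (Pt i').1 (Pt i').2 →
        w ∈ vertsW (Qt (τ j')).1 (Qt (τ j')).2 → False := by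
      intro i' j' hij' hwP hwQ
      obtain ⟨h1, h2, h3⟩ := key i' (τ j') w hwP hwQ
      have hmj : m j' = w := by rw [← hτ j']; exact h2.symm
      by_cases hj' : lastP j' = u
      · have hmv : m j' = v := by simp [hm_def, hj']
        rw [hmv] at hmj
        rw [← hmj] at h3
        exact hvnotS h3
      · have hml : m j' = lastP j' := by simp [hm_def, hj']
        have : lastP j' = lastP i' := by rw [← hml, hmj, h1]
        exact hij' (hlastP_inj this).symm
    rcases hwi' with hwi' | hwi' <;> rcases hwj' with hwj' | hwj'
    · exact Finset.disjoint_left.mp (hPtd i j hij) hwi' hwj'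
    · exact hPQ i j hij hwi' hwj'
    · exact hPQ j i (Ne.symm hij) hwj' hwi'
    · exact Finset.disjoint_left.mp (hQtd (τ i) (τ j) (fun h => hij (hτ_inj h))) hwi' hwj'

theorem menger (E : Finset (V × V)) (A B : Set V) (k : ℕ)
    (hcut : ∀ S : Finset V, SepOn E A B ↑S → k ≤ S.card) :
    ∃ P : Fin k → ℕ × (ℕ → V),
      (∀ i, WalkOn E (P i).1 (P i).2 ∧ (P i).2 0 ∈ A ∧ (P i).2 (P i).1 ∈ B) ∧
      ∀ i j, i ≠ j → Disjoint (vertsW (P i).1 (P i).2) (vertsW (P j).1 (P j).2) :=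
  mengerAux E.card E le_rfl A B k hcut

end MengerMain

/-- The counting step in the proof of Theorem 1.5. -/
theorem stmt10 (V : Type) [Fintype V] (G : V → V → Prop) (hor : Oriented G)
    (htf : ¬ HasTriangle G) (hstrong : StronglyConnected G)
    (k : ℕ) (hk : strongConn G = k) (hk1 : 1 ≤ k) (hk2 : k ≤ minSemiDeg G)
    (x : V) :
    ∃ T : Finset (V × V × V),
      2 * (k : ℤ) + (outDeg G x : ℤ) + (inDeg G x : ℤ) + 1 - (Fintype.card V : ℤ)
          ≤ (T.card : ℤ) ∧
      (∀ t ∈ T, FourCycleAt G x t) ∧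
      ∀ t ∈ T, ∀ t' ∈ T, t ≠ t' → cycVertsAt x t ∩ cycVertsAt x t' = {x} := by
  classical
  have hirr : ∀ a : V, ¬ G a a := fun a ha => hor a a ha ha
  set A : Set V := {y | G x y} with hA_def
  set B : Set V := {y | G y x} with hB_def
  have houtA : outDeg G x = A.ncard := rfl
  have hinB : inDeg G x = B.ncard := rfl
  have hAB : ∀ y, y ∈ A → y ∈ B → False := fun y h1 h2 => hor x y h1 h2
  have hxA : x ∉ A := fun h => hirr x h
  have hxB : x ∉ B := fun h => hirr x h
  set R : Set V := {w | w ≠ x ∧ w ∉ A ∧ w ∉ B} with hR_def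
  have hpart : ∀ w : V, w ≠ x → w ∉ A → w ∉ B → w ∈ R := fun w h1 h2 h3 => ⟨h1, h2, h3⟩
  set E : Finset (V × V) :=
    Finset.univ.filter (fun pq : V × V => G pq.1 pq.2 ∧ pq.1 ≠ x ∧ pq.2 ≠ x) with hE_def
  have hEmem : ∀ a b : V, ((a, b) ∈ E) ↔ (G a b ∧ a ≠ x ∧ b ≠ x) := by
    intro a b
    simp [hE_def]
  -- degree bounds
  have hsemi : minSemiDeg G ≤ min (outDeg G x) (inDeg G x) := Nat.sInf_le ⟨x, rfl⟩
  have hkA : k ≤ A.ncard := by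
    have := le_trans hk2 (le_trans hsemi (min_le_left _ _))
    rw [houtA] at this
    exact this
  have hkB : k ≤ B.ncard := by
    have := le_trans hk2 (le_trans hsemi (min_le_right _ _))
    rw [hinB] at this
    exact this
  -- small sets do not disconnect
  have hdel : ∀ S : Finset V, S.card < k → DelStrong G ↑S := by
    intro S hlt
    by_contra hnd
    have hle : strongConn G ≤ S.card :=
      Nat.sInf_le ⟨↑S, Set.ncard_coe_finset S, hnd⟩
    omega
  -- convert reachability to walks
  have hwalk_of_rtg : ∀ (S : Set V) (a c : V),
      Relation.ReflTransGen (fun p q => G p q ∧ p ∉ S ∧ q ∉ S) a c → a ∉ S →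
      ∃ (p : ℕ) (f : ℕ → V), f 0 = a ∧ f p = c ∧ (∀ i, i < p → G (f i) (f (i + 1))) ∧
        (∀ i, i ≤ p → f i ∉ S) := by
    intro S a c h ha
    induction h with
    | refl =>
      exact ⟨0, fun _ => a, rfl, rfl, fun i hi => absurd hi (by omega), fun i _ => ha⟩
    | @tail b c hab hbc ih =>
      obtain ⟨p, f, hf0, hfp, hfG, hfS⟩ := ih
      refine ⟨p + 1, fun i => if i ≤ p then f i else c, by simp [hf0],
        by simp only [if_neg (show ¬ p + 1 ≤ p by omega)], ?_, ?_⟩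
      · intro i hi
        by_cases h1 : i + 1 ≤ p
        · have h0 : i ≤ p := by omega
          simp only [if_pos h0, if_pos h1]
          exact hfG i (by omega)
        · have h2 : i = p := by omega
          subst h2
          simp only [if_pos (le_refl i), if_neg h1]
          rw [hfp]
          exact hbc.1
      · intro i hi
        by_cases h1 : i ≤ p
        · simp only [if_pos h1]
          exact hfS i h1
        · simp only [if_neg h1]
          exact hbc.2.2
  -- the cut condition
  have hcut : ∀ S : Finset V, SepOn E A B ↑S → k ≤ S.card := by
    intro S hsep
    by_contra hlt
    push_neg at hlt
    obtain ⟨a, haA, haS⟩ : ∃ a, a ∈ A ∧ a ∉ (↑S : Set V) := by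
      by_contra h
      push_neg at h
      have := Set.ncard_le_ncard (fun y hy => h y hy) (Finset.finite_toSet S)
      rw [Set.ncard_coe_finset] at this
      omega
    obtain ⟨c, hcB, hcS⟩ : ∃ c, c ∈ B ∧ c ∉ (↑S : Set V) := by
      by_contra h
      push_neg at h
      have := Set.ncard_le_ncard (fun y hy => h y hy) (Finset.finite_toSet S)
      rw [Set.ncard_coe_finset] at this
      omega
    obtain ⟨p, f, hf0, hfp, hfG, hfS⟩ :=
      hwalk_of_rtg ↑S a c (hdel S hlt a haS c hcS) haS
    by_cases hx : ∃ i, i ≤ p ∧ f i = x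
    · obtain ⟨i₀, ⟨hi₀p, hi₀x⟩, hmax⟩ := exists_greatest (fun m hm => hm.1) hx
      have hcx : c ≠ x := by
        intro h
        rw [h] at hcB
        exact hirr x hcB
      have hi₀p' : i₀ < p := by
        rcases Nat.lt_or_ge i₀ p with h | h
        · exact h
        · exfalso
          have hip : i₀ = p := by omega
          rw [hip, hfp] at hi₀x
          exact hcx hi₀x
      have hgA : f (i₀ + 1 + 0) ∈ A := by
        have harc : G (f i₀) (f (i₀ + 1)) := hfG i₀ hi₀p'
        rw [hi₀x] at harc
        exact harc
      have hgx : ∀ t, t ≤ p - i₀ - 1 → f (i₀ + 1 + t) ≠ x := by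
        intro t ht hc
        have := hmax (i₀ + 1 + t) ⟨by omega, hc⟩
        omega
      have hgw : WalkOn E (p - i₀ - 1) (fun t => f (i₀ + 1 + t)) := by
        intro t ht
        show (f (i₀ + 1 + t), f (i₀ + 1 + (t + 1))) ∈ E
        refine (hEmem _ _).mpr ⟨hfG (i₀ + 1 + t) (by omega), hgx t (by omega), ?_⟩
        exact hgx (t + 1) (by omega)
      obtain ⟨t, htle, htS⟩ := hsep (p - i₀ - 1) (fun t => f (i₀ + 1 + t)) hgw hgA
        (by
          show f (i₀ + 1 + (p - i₀ - 1)) ∈ B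
          rw [show i₀ + 1 + (p - i₀ - 1) = p by omega, hfp]
          exact hcB)
      exact hfS (i₀ + 1 + t) (by omega) htS
    · push_neg at hx
      have hw : WalkOn E p f := fun i hi =>
        (hEmem _ _).mpr ⟨hfG i hi, hx i (by omega), hx (i + 1) (by omega)⟩
      obtain ⟨t, htle, htS⟩ := hsep p f hw (hf0 ▸ haA) (hfp ▸ hcB)
      exact hfS t htle htS
  -- apply Menger
  obtain ⟨P, hPw, hPd⟩ := menger E A B k hcut
  have hG : ∀ i : Fin k, ∀ t, t < (P i).1 → G ((P i).2 t) ((P i).2 (t + 1)) :=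
    fun i t ht => ((hEmem _ _).mp ((hPw i).1 t ht)).1
  have hp1 : ∀ i : Fin k, 1 ≤ (P i).1 := by
    intro i
    by_contra h
    have h0 : (P i).1 = 0 := by omega
    obtain ⟨_, h0A, hpB⟩ := hPw i
    rw [h0] at hpB
    exact hAB _ h0A hpB
  have hnex : ∀ i : Fin k, ∀ t, t ≤ (P i).1 → (P i).2 t ≠ x := by
    intro i t ht
    rcases Nat.lt_or_ge t (P i).1 with h | h
    · exact ((hEmem _ _).mp ((hPw i).1 t h)).2.1
    · have ht' : t = (P i).1 := by omega
      have harc := (hPw i).1 ((P i).1 - 1) (by have := hp1 i; omega)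
      have h2 := ((hEmem _ _).mp harc).2.2
      rw [show (P i).1 - 1 + 1 = (P i).1 by have := hp1 i; omega] at h2
      rw [ht']
      exact h2
  have hexR : ∀ i : Fin k, ∃ t, t ≤ (P i).1 ∧ (P i).2 t ∈ R := by
    intro i
    obtain ⟨hw, h0A, hpB⟩ := hPw i
    obtain ⟨j₀, ⟨hj₀p, hj₀B⟩, hmin⟩ :=
      exists_least (⟨(P i).1, le_refl _, hpB⟩ : ∃ t, t ≤ (P i).1 ∧ (P i).2 t ∈ B)
    have hj₀1 : 1 ≤ j₀ := by
      by_contra h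
      have h0 : j₀ = 0 := by omega
      rw [h0] at hj₀B
      exact hAB _ h0A hj₀B
    refine ⟨j₀ - 1, by omega, ?_⟩
    have harc : G ((P i).2 (j₀ - 1)) ((P i).2 j₀) := by
      have := hG i (j₀ - 1) (by omega)
      rw [show j₀ - 1 + 1 = j₀ by omega] at this
      exact this
    refine hpart _ (hnex i (j₀ - 1) (by omega)) ?_
      (fun hB => hmin (j₀ - 1) (by omega) ⟨by omega, hB⟩)
    intro hA
    exact htf ⟨x, (P i).2 (j₀ - 1), (P i).2 j₀, hA, harc, hj₀B⟩
  -- counting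
  set Rf : Finset V := (Set.toFinite R).toFinset with hRf_def
  set F : Fin k → Finset V := fun i => vertsW (P i).1 (P i).2 ∩ Rf with hF_def
  have hF1 : ∀ i, 1 ≤ (F i).card := by
    intro i
    obtain ⟨t, ht, htR⟩ := hexR i
    have hmem : (P i).2 t ∈ F i := by
      simp only [hF_def, Finset.mem_inter]
      exact ⟨mem_vertsW.mpr ⟨t, ht, rfl⟩, by
        rw [hRf_def, Set.Finite.mem_toFinset]
        exact htR⟩
    exact Finset.card_pos.mpr ⟨_, hmem⟩
  have hFd : ∀ i j : Fin k, i ≠ j → Disjoint (F i) (F j) := by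
    intro i j hij
    exact Disjoint.mono Finset.inter_subset_left Finset.inter_subset_left (hPd i j hij)
  have hsumR : ∑ i : Fin k, (F i).card ≤ Rf.card := by
    rw [← Finset.card_biUnion (fun i _ j _ hij => hFd i j hij)]
    apply Finset.card_le_card
    intro w hw
    obtain ⟨i, _, hwF⟩ := Finset.mem_biUnion.mp hw
    exact Finset.inter_subset_right (by rw [hF_def] at hwF; exact hwF)
  set I : Finset (Fin k) := Finset.univ.filter (fun i => (F i).card = 1) with hI_def
  have hIsum : ∑ i ∈ I, (F i).card = I.card := by
    have h1 : ∀ i ∈ I, (F i).card = 1 := fun i hi => (Finset.mem_filter.mp hi).2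
    calc ∑ i ∈ I, (F i).card = ∑ _i ∈ I, 1 := Finset.sum_congr rfl h1
    _ = I.card := by simp
  have hsplit := Finset.sum_filter_add_sum_filter_not Finset.univ
    (fun i => (F i).card = 1) (fun i => (F i).card)
  have hIcomp : I.card + (Finset.univ.filter (fun i => ¬ (F i).card = 1)).card = k := by
    rw [hI_def, Finset.card_filter_add_card_filter_not]
    simp
  have hsum_lower : (Finset.univ.filter (fun i => ¬ (F i).card = 1)).card * 2 ≤
      ∑ i ∈ Finset.univ.filter (fun i => ¬ (F i).card = 1), (F i).card := by
    have h2 : ∀ i ∈ Finset.univ.filter (fun i => ¬ (F i).card = 1), 2 ≤ (F i).card := by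
      intro i hi
      have := hF1 i
      have := (Finset.mem_filter.mp hi).2
      omega
    have := Finset.card_nsmul_le_sum
      (Finset.univ.filter (fun i => ¬ (F i).card = 1)) (fun i => (F i).card) 2 h2
    simpa [smul_eq_mul] using this
  have h2k : 2 * k ≤ I.card + ∑ i : Fin k, (F i).card := by
    have hIfil : ∑ i ∈ Finset.univ.filter (fun i => (F i).card = 1), (F i).card = I.card := by
      rw [← hI_def]
      exact hIsum
    omega
  -- cardinality of V
  have hxR : x ∉ R := fun h => h.1 rfl
  have hABdisj : Disjoint A B := Set.disjoint_left.mpr (fun {y} hy hy' => hAB y hy hy')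
  have hABR : Disjoint (A ∪ B) R := by
    rw [Set.disjoint_left]
    rintro y (hy | hy) hyR
    · exact hyR.2.1 hy
    · exact hyR.2.2 hy
  have huniv : (Set.univ : Set V) = insert x (A ∪ B ∪ R) := by
    ext w
    simp only [Set.mem_univ, true_iff, Set.mem_insert_iff, Set.mem_union]
    by_cases h1 : w = x
    · tauto
    by_cases h2 : w ∈ A
    · tauto
    by_cases h3 : w ∈ B
    · tauto
    exact Or.inr (Or.inr (hpart w h1 h2 h3))
  have hcardV : Fintype.card V = 1 + A.ncard + B.ncard + R.ncard := by
    have h0 : (Set.univ : Set V).ncard = Fintype.card V := by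
      rw [Set.ncard_univ, Nat.card_eq_fintype_card]
    rw [huniv] at h0
    have hx2 : x ∉ A ∪ B ∪ R := by
      simp only [Set.mem_union]
      push_neg
      exact ⟨⟨hxA, hxB⟩, hxR⟩
    rw [Set.ncard_insert_of_notMem hx2 (Set.toFinite _)] at h0
    rw [Set.ncard_union_eq hABR (Set.toFinite _) (Set.toFinite _)] at h0
    rw [Set.ncard_union_eq hABdisj (Set.toFinite _) (Set.toFinite _)] at h0
    omega
  have hRfcard : Rf.card = R.ncard := by
    rw [hRf_def]
    exact (Set.ncard_eq_toFinset_card R (Set.toFinite R)).symm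
  -- extraction of 4-cycles
  have hext : ∀ i : Fin k, i ∈ I → ∃ t : V × V × V, FourCycleAt G x t ∧
      t.1 ∈ vertsW (P i).1 (P i).2 ∧ t.2.1 ∈ vertsW (P i).1 (P i).2 ∧
      t.2.2 ∈ vertsW (P i).1 (P i).2 := by
    intro i hiI
    obtain ⟨hw, h0A, hpB⟩ := hPw i
    obtain ⟨b₀, hb₀⟩ := Finset.card_eq_one.mp ((Finset.mem_filter.mp hiI).2)
    have huniq : ∀ t, t ≤ (P i).1 → (P i).2 t ∈ R → (P i).2 t = b₀ := by
      intro t ht htR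
      have hmem : (P i).2 t ∈ F i := by
        simp only [hF_def, Finset.mem_inter]
        exact ⟨mem_vertsW.mpr ⟨t, ht, rfl⟩, by
          rw [hRf_def, Set.Finite.mem_toFinset]
          exact htR⟩
      rw [hb₀] at hmem
      exact Finset.mem_singleton.mp hmem
    obtain ⟨j₀, ⟨hj₀p, hj₀R⟩, hminR⟩ := exists_least (hexR i)
    obtain ⟨j₁, ⟨hj₁p, hj₁R⟩, hmaxR⟩ := exists_greatest (fun m hm => hm.1) (hexR i)
    have hj₀1 : 1 ≤ j₀ := by
      by_contra h
      have h0 : j₀ = 0 := by omega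
      rw [h0] at hj₀R
      exact hj₀R.2.1 h0A
    have hj₁p' : j₁ < (P i).1 := by
      rcases Nat.lt_or_ge j₁ (P i).1 with h | h
      · exact h
      · exfalso
        have hip : j₁ = (P i).1 := by omega
        rw [hip] at hj₁R
        exact hj₁R.2.2 hpB
    have hbelow : ∀ t, t < j₀ → (P i).2 t ∈ A := by
      intro t
      induction t with
      | zero => exact fun _ => h0A
      | succ t iht =>
        intro ht
        have htA := iht (by omega)
        have harc := hG i t (by omega)
        by_contra hnA
        have hnx : (P i).2 (t + 1) ≠ x := hnex i (t + 1) (by omega)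
        have hnR : (P i).2 (t + 1) ∉ R := fun hR => hminR (t + 1) (by omega) ⟨by omega, hR⟩
        have hnB : (P i).2 (t + 1) ∉ B :=
          fun hB => htf ⟨x, (P i).2 t, (P i).2 (t + 1), htA, harc, hB⟩
        exact hnR (hpart _ hnx hnA hnB)
    have habove : ∀ d, j₁ < (P i).1 - d → (P i).2 ((P i).1 - d) ∈ B := by
      intro d
      induction d with
      | zero => intro _; simpa using hpB
      | succ d ihd =>
        intro ht
        have h1 : j₁ < (P i).1 - d := by omega
        have hB1 := ihd h1
        have ht1 : ((P i).1 - (d + 1)) + 1 = (P i).1 - d := by omega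
        have harc : G ((P i).2 ((P i).1 - (d + 1))) ((P i).2 ((P i).1 - d)) := by
          have := hG i ((P i).1 - (d + 1)) (by omega)
          rw [ht1] at this
          exact this
        by_contra hnB
        have hnx : (P i).2 ((P i).1 - (d + 1)) ≠ x := hnex i _ (by omega)
        have hnR : (P i).2 ((P i).1 - (d + 1)) ∉ R := by
          intro hR
          have := hmaxR ((P i).1 - (d + 1)) ⟨by omega, hR⟩
          omega
        have hnA : (P i).2 ((P i).1 - (d + 1)) ∉ A :=
          fun hA => htf ⟨x, (P i).2 ((P i).1 - (d + 1)), (P i).2 ((P i).1 - d), hA, harc, hB1⟩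
        exact hnR (hpart _ hnx hnA hnB)
    have hpredA : (P i).2 (j₀ - 1) ∈ A := hbelow (j₀ - 1) (by omega)
    have harc1 : G ((P i).2 (j₀ - 1)) ((P i).2 j₀) := by
      have := hG i (j₀ - 1) (by omega)
      rw [show j₀ - 1 + 1 = j₀ by omega] at this
      exact this
    have hsuccB : (P i).2 (j₁ + 1) ∈ B := by
      have := habove ((P i).1 - (j₁ + 1)) (by omega)
      rw [show (P i).1 - ((P i).1 - (j₁ + 1)) = j₁ + 1 by omega] at this
      exact this
    have hbeq : (P i).2 j₁ = (P i).2 j₀ := by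
      rw [huniq j₁ hj₁p hj₁R, ← huniq j₀ hj₀p hj₀R]
    have harc2 : G ((P i).2 j₀) ((P i).2 (j₁ + 1)) := by
      have := hG i j₁ hj₁p'
      rw [hbeq] at this
      exact this
    refine ⟨((P i).2 (j₀ - 1), (P i).2 j₀, (P i).2 (j₁ + 1)),
      ⟨hpredA, harc1, harc2, hsuccB, ?_, ?_, ?_, ?_, ?_, ?_⟩,
      mem_vertsW.mpr ⟨j₀ - 1, by omega, rfl⟩,
      mem_vertsW.mpr ⟨j₀, by omega, rfl⟩,
      mem_vertsW.mpr ⟨j₁ + 1, by omega, rfl⟩⟩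
    · show x ≠ (P i).2 (j₀ - 1)
      intro h
      rw [← h] at hpredA
      exact hxA hpredA
    · show x ≠ (P i).2 j₀
      intro h
      exact hj₀R.1 h.symm
    · show x ≠ (P i).2 (j₁ + 1)
      intro h
      rw [← h] at hsuccB
      exact hxB hsuccB
    · show (P i).2 (j₀ - 1) ≠ (P i).2 j₀
      intro h
      rw [← h] at hj₀R
      exact hj₀R.2.1 hpredA
    · show (P i).2 (j₀ - 1) ≠ (P i).2 (j₁ + 1)
      intro h
      rw [← h] at hsuccB
      exact hAB _ hpredA hsuccB
    · show (P i).2 j₀ ≠ (P i).2 (j₁ + 1)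
      intro h
      rw [← h] at hsuccB
      exact hj₀R.2.2 hsuccB
  choose trip htripc htrip1 htrip2 htrip3 using hext
  set T : Finset (V × V × V) := I.attach.image (fun i => trip i.1 i.2) with hT_def
  have hinj : Set.InjOn (fun i : {i // i ∈ I} => trip i.1 i.2) I.attach := by
    intro i _ j _ hij
    by_contra hne
    have hne' : i.1 ≠ j.1 := fun h => hne (Subtype.ext h)
    have hb1 := htrip2 i.1 i.2
    have hb2 := htrip2 j.1 j.2
    have heq : (trip i.1 i.2).2.1 = (trip j.1 j.2).2.1 := congrArg (fun t => t.2.1) hij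
    rw [heq] at hb1
    exact Finset.disjoint_left.mp (hPd i.1 j.1 hne') hb1 hb2
  have hTcard : T.card = I.card := by
    rw [hT_def, Finset.card_image_of_injOn hinj, Finset.card_attach]
  have hmemverts : ∀ (i : {i // i ∈ I}) (w : V),
      (w = (trip i.1 i.2).1 ∨ w = (trip i.1 i.2).2.1 ∨ w = (trip i.1 i.2).2.2) →
      w ∈ vertsW (P i.1).1 (P i.1).2 := by
    rintro i w (rfl | rfl | rfl)
    · exact htrip1 i.1 i.2
    · exact htrip2 i.1 i.2
    · exact htrip3 i.1 i.2
  refine ⟨T, ?_, ?_, ?_⟩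
  · have hfin : T.card = I.card := hTcard
    omega
  · intro t ht
    obtain ⟨i, _, rfl⟩ := Finset.mem_image.mp (by rw [hT_def] at ht; exact ht)
    exact htripc i.1 i.2
  · intro t ht t' ht' hne
    obtain ⟨i, _, rfl⟩ := Finset.mem_image.mp (by rw [hT_def] at ht; exact ht)
    obtain ⟨j, _, rfl⟩ := Finset.mem_image.mp (by rw [hT_def] at ht'; exact ht')
    have hij : i.1 ≠ j.1 := by
      intro h
      exact hne (by rw [Subtype.ext h])
    ext w
    simp only [cycVertsAt, Set.mem_inter_iff, Set.mem_insert_iff, Set.mem_singleton_iff]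
    constructor
    · rintro ⟨h1, h2⟩
      rcases h1 with h1 | h1
      · exact h1
      rcases h2 with h2 | h2
      · exact h2
      exfalso
      exact Finset.disjoint_left.mp (hPd i.1 j.1 hij) (hmemverts i w h1) (hmemverts j w h2)
    · rintro rfl
      exact ⟨Or.inl rfl, Or.inl rfl⟩
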